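/- In the envy-cycles procedure with subadditive valuations, suppose the current partial allocation Y is min(α, 1/(1+γ))-EFX, agent i* is not envied by any agent (v_j(Y_{i*}) ≤ v_j(Y_j) for all j), and the item x to be allocated satisfies v_j({x}) ≤ γ·v_j(Y_j) for all agents j. Then the allocation obtained by replacing Y_{i*} with Y_{i*} ∪ {x} is still min(α, 1/(1+γ))-EFX. -/
import Mathlib


open Finset

/-- Envy-cycles step (subadditive): if `Y` is `min(α, 1/(1+γ))`-EFX, agent `istar` is
unenvied, and the unallocated item `x` satisfies `v_j({x}) ≤ γ·v_j(Y_j)` for all `j`,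
then adding `x` to `Y_istar` preserves `min(α, 1/(1+γ))`-EFX. -/
theorem stmt_6 (n m : ℕ) (α γ : ℝ) (hα0 : 0 ≤ α) (hα1 : α ≤ 1) (hγ0 : 0 ≤ γ) (hγ1 : γ ≤ 1)
    (v : Fin n → Finset (Fin m) → ℝ)
    (hmono : ∀ i, ∀ S T : Finset (Fin m), S ⊆ T → v i S ≤ v i T)
    (hsub : ∀ i, ∀ S T : Finset (Fin m), v i (S ∪ T) ≤ v i S + v i T)
    (Y : Fin n → Finset (Fin m))
    (hdisj : ∀ i j, i ≠ j → Disjoint (Y i) (Y j))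
    (x : Fin m) (hx : ∀ j, x ∉ Y j)
    (istar : Fin n)
    (hunenvied : ∀ j, v j (Y istar) ≤ v j (Y j))
    (hxsmall : ∀ j, v j {x} ≤ γ * v j (Y j))
    (hefx : ∀ i j, ∀ g ∈ Y j, v i (Y i) ≥ min α (1 / (1 + γ)) * v i ((Y j).erase g)) :
    ∀ i j, ∀ g ∈ Function.update Y istar (insert x (Y istar)) j,
      v i (Function.update Y istar (insert x (Y istar)) i) ≥
        min α (1 / (1 + γ)) * v i ((Function.update Y istar (insert x (Y istar)) j).erase g) := by
  have hγpos : (0:ℝ) < 1 + γ := by linarith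
  set c := min α (1 / (1 + γ)) with hc
  have hc0 : 0 ≤ c := le_min hα0 (by positivity)
  have hc1 : c ≤ 1 := le_trans (min_le_left _ _) hα1
  have hc2 : c * (1 + γ) ≤ 1 := by
    have := min_le_right α (1 / (1 + γ))
    calc c * (1 + γ) ≤ (1 / (1 + γ)) * (1 + γ) := by nlinarith
    _ = 1 := by field_simp
  have vnn : ∀ i S, 0 ≤ v i S := by
    intro i S
    have := hsub i S S
    rw [Finset.union_self] at this
    linarith
  have hvi : ∀ i, v i (Y i) ≤ v i (Function.update Y istar (insert x (Y istar)) i) := by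
    intro i
    by_cases hi : i = istar
    · subst hi
      rw [Function.update_self]
      exact hmono _ _ _ (Finset.subset_insert _ _)
    · rw [Function.update_of_ne hi]
  intro i j g hg
  by_cases hj : j = istar
  · rw [hj] at hg ⊢
    rw [Function.update_self] at hg ⊢
    by_cases hgx : g = x
    · subst hgx
      rw [Finset.erase_insert (hx istar)]
      have h1 : v i (Y istar) ≤ v i (Y i) := hunenvied i
      have h2 := vnn i (Y istar)
      have h3 := hvi i
      nlinarith
    · have hgY : g ∈ Y istar := by
        rcases Finset.mem_insert.1 hg with h | h
        · exact absurd h hgx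
        · exact h
      have hss : (insert x (Y istar)).erase g ⊆ {x} ∪ (Y istar).erase g := by
        intro a ha
        simp only [Finset.mem_erase, Finset.mem_insert, Finset.mem_union,
          Finset.mem_singleton] at ha ⊢
        tauto
      have h1 : v i ((insert x (Y istar)).erase g) ≤ v i {x} + v i ((Y istar).erase g) :=
        le_trans (hmono _ _ _ hss) (hsub i _ _)
      have h2 : v i ((Y istar).erase g) ≤ v i (Y i) :=
        le_trans (hmono _ _ _ (Finset.erase_subset _ _)) (hunenvied i)
      have h3 : v i {x} ≤ γ * v i (Y i) :=
        le_trans (hxsmall i) (by nlinarith [hunenvied i, hmono i (Y istar) (Y istar) subset_rfl])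
      have h4 : v i ((insert x (Y istar)).erase g) ≤ (1 + γ) * v i (Y i) := by nlinarith
      have h5 := vnn i (Y i)
      have h6 := vnn i ((insert x (Y istar)).erase g)
      have h7 := hvi i
      nlinarith
  · rw [Function.update_of_ne hj] at hg ⊢
    have := hefx i j g hg
    have h7 := hvi i
    linarith
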